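/- (Fundamental theorem of calculus for the local M-derivative) Let 0 < a < b, 0 < α ≤ 1 and β > 0, and let f : (a,b) → ℝ be differentiable (in the classical sense, with its derivative integrable on the relevant intervals). Then for all t ∈ (a,b) with t > a, _M I_a^{α,β}(𝒟_M^{α,β} f)(t) = f(t) − f(a). -/

import Mathlib

open Filter Topology

/-- One-parameter Mittag-Leffler function `E_β(x) = ∑_{k=0}^∞ x^k / Γ(βk+1)`. -/
noncomputable def mittagLeffler (β x : ℝ) : ℝ :=
  ∑' k : ℕ, x ^ k / Real.Gamma (β * k + 1)

/-- `f` has local M-derivative `L` of order `α` with parameter `β` at `t`, i.e.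
`lim_{ε→0} (f (t · E_β (ε t^{-α})) - f t)/ε = L`. -/
def HasLocalMDerivAt (α β : ℝ) (f : ℝ → ℝ) (t L : ℝ) : Prop :=
  Tendsto (fun ε : ℝ => (f (t * mittagLeffler β (ε * t ^ (-α))) - f t) / ε)
    (𝓝[≠] (0 : ℝ)) (𝓝 L)

/-- The M-integral `_M I_a^{α,β} f(t) = Γ(β+1) ∫_a^t f(x)/x^{1-α} dx`. -/
noncomputable def MIntegral (α β a t : ℝ) (f : ℝ → ℝ) : ℝ :=
  Real.Gamma (β + 1) * ∫ x in a..t, f x / x ^ (1 - α)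

lemma gamma_ge_half {x : ℝ} (hx : 1 ≤ x) : (1/2 : ℝ) ≤ Real.Gamma x := by
  have hmono := Real.Gamma_strictMonoOn_Ici.monotoneOn
  rcases le_or_gt 2 x with h | h
  · have : Real.Gamma 2 ≤ Real.Gamma x :=
      hmono (by norm_num : (2:ℝ) ∈ Set.Ici 2) h h
    rw [Real.Gamma_two] at this; linarith
  · have hx0 : x ≠ 0 := by linarith
    have h1 : Real.Gamma (x+1) = x * Real.Gamma x := Real.Gamma_add_one hx0
    have h2 : Real.Gamma 2 ≤ Real.Gamma (x+1) :=
      hmono (by norm_num : (2:ℝ) ∈ Set.Ici 2) (by simp [Set.mem_Ici]; linarith) (by linarith)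
    rw [Real.Gamma_two] at h2
    nlinarith

lemma gamma_arg_ge (β : ℝ) (hβ : 0 < β) (k : ℕ) : (1/2 : ℝ) ≤ Real.Gamma (β * k + 1) :=
  gamma_ge_half (by nlinarith [mul_nonneg hβ.le (Nat.cast_nonneg (α := ℝ) k)])

lemma ml_term_bound (β : ℝ) (hβ : 0 < β) {x : ℝ} (hx : |x| ≤ 1/2) (k : ℕ) :
    ‖x ^ k / Real.Gamma (β * k + 1)‖ ≤ 2 * (1/2) ^ k := by
  have hg := gamma_arg_ge β hβ k
  have hgpos : (0:ℝ) < Real.Gamma (β * k + 1) := by linarith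
  rw [norm_div, Real.norm_eq_abs, Real.norm_eq_abs, abs_pow,
    abs_of_pos hgpos]
  have hnum : |x| ^ k ≤ (1/2 : ℝ) ^ k := pow_le_pow_left₀ (abs_nonneg x) hx k
  calc |x| ^ k / Real.Gamma (β * k + 1) ≤ (1/2)^k / (1/2) :=
        div_le_div₀ (by positivity) hnum (by norm_num) hg
    _ = 2 * (1/2)^k := by ring

lemma ml_norm_summable (β : ℝ) (hβ : 0 < β) {x : ℝ} (hx : |x| ≤ 1/2) :
    Summable (fun k : ℕ => ‖x ^ k / Real.Gamma (β * k + 1)‖) :=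
  Summable.of_nonneg_of_le (fun k => norm_nonneg _) (ml_term_bound β hβ hx)
    (summable_geometric_two.mul_left 2)

lemma ml_summable (β : ℝ) (hβ : 0 < β) {x : ℝ} (hx : |x| ≤ 1/2) :
    Summable (fun k : ℕ => x ^ k / Real.Gamma (β * k + 1)) :=
  (ml_norm_summable β hβ hx).of_norm

lemma ml_zero (β : ℝ) : mittagLeffler β 0 = 1 := by
  unfold mittagLeffler
  rw [tsum_eq_single 0 (fun k hk => by simp [zero_pow hk])]
  simp [Real.Gamma_one]

lemma ml_expand (β : ℝ) (hβ : 0 < β) {u : ℝ} (hu : |u| ≤ 1/2) :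
    mittagLeffler β u = 1 + u / Real.Gamma (β + 1)
      + ∑' k : ℕ, u ^ (k+2) / Real.Gamma (β * (k+2) + 1) := by
  have hS := ml_summable β hβ hu
  unfold mittagLeffler
  rw [Summable.tsum_eq_zero_add hS]
  have hS1 : Summable (fun k : ℕ => u ^ (k+1) / Real.Gamma (β * (k+1) + 1)) := by
    have := (summable_nat_add_iff 1).mpr hS
    simpa using this
  have : (∑' k : ℕ, u ^ (k+1) / Real.Gamma (β * ((k:ℝ)+1) + 1))
      = u / Real.Gamma (β + 1) + ∑' k : ℕ, u ^ (k+2) / Real.Gamma (β * (k+2) + 1) := by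
    rw [Summable.tsum_eq_zero_add (by exact_mod_cast hS1)]
    push_cast
    ring_nf
  push_cast
  rw [this]
  simp [Real.Gamma_one]
  ring

lemma ml_tail_bound (β : ℝ) (hβ : 0 < β) {u : ℝ} (hu : |u| ≤ 1/2) :
    |∑' k : ℕ, u ^ (k+2) / Real.Gamma (β * (k+2) + 1)| ≤ 4 * u ^ 2 := by
  have hterm : ∀ k : ℕ, ‖u ^ (k+2) / Real.Gamma (β * (k+2) + 1)‖ ≤ 2 * u^2 * (1/2)^k := by
    intro k
    have hg : (1/2:ℝ) ≤ Real.Gamma (β * ((k:ℝ)+2) + 1) := by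
      have := gamma_arg_ge β hβ (k+2); push_cast at this; exact this
    have hgpos : (0:ℝ) < Real.Gamma (β * ((k:ℝ)+2) + 1) := by linarith
    rw [norm_div, Real.norm_eq_abs, Real.norm_eq_abs, abs_pow, abs_of_pos hgpos]
    have hnum : |u| ^ (k+2) ≤ u^2 * (1/2)^k := by
      have h1 : |u| ^ (k+2) = |u|^2 * |u|^k := by ring
      have h2 : |u|^k ≤ (1/2:ℝ)^k := pow_le_pow_left₀ (abs_nonneg u) hu k
      have h3 : |u|^2 = u^2 := sq_abs u
      rw [h1, h3]
      exact mul_le_mul_of_nonneg_left h2 (sq_nonneg u)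
    calc |u| ^ (k+2) / Real.Gamma (β * ((k:ℝ)+2) + 1)
        ≤ (u^2 * (1/2)^k) / (1/2) := div_le_div₀ (by positivity) hnum (by norm_num) hg
      _ = 2 * u^2 * (1/2)^k := by ring
  have hgeo : Summable (fun k : ℕ => 2 * u^2 * (1/2:ℝ)^k) := summable_geometric_two.mul_left _
  have hsum : Summable (fun k : ℕ => ‖u ^ (k+2) / Real.Gamma (β * (k+2) + 1)‖) :=
    Summable.of_nonneg_of_le (fun k => norm_nonneg _) hterm hgeo
  calc |∑' k : ℕ, u ^ (k+2) / Real.Gamma (β * (k+2) + 1)|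
      ≤ ∑' k : ℕ, ‖u ^ (k+2) / Real.Gamma (β * (k+2) + 1)‖ := norm_tsum_le_tsum_norm hsum
    _ ≤ ∑' k : ℕ, 2 * u^2 * (1/2:ℝ)^k := Summable.tsum_le_tsum hterm hsum hgeo
    _ = 2 * u^2 * 2 := by rw [tsum_mul_left, tsum_geometric_two]
    _ = 4 * u^2 := by ring

lemma ml_hasDerivAt (β : ℝ) (hβ : 0 < β) :
    HasDerivAt (mittagLeffler β) (1 / Real.Gamma (β + 1)) 0 := by
  rw [hasDerivAt_iff_isLittleO, Asymptotics.isLittleO_iff]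
  intro c hc
  have hδ : (0:ℝ) < min (1/2) (c/4) := by positivity
  filter_upwards [Metric.ball_mem_nhds (0:ℝ) hδ] with u hu
  rw [Metric.mem_ball, Real.dist_eq, sub_zero] at hu
  have hu2 : |u| ≤ 1/2 := le_of_lt (lt_of_lt_of_le hu (min_le_left _ _))
  have hu4 : |u| ≤ c/4 := le_of_lt (lt_of_lt_of_le hu (min_le_right _ _))
  rw [ml_expand β hβ hu2, ml_zero β]
  have : (1 + u / Real.Gamma (β + 1) + ∑' k : ℕ, u ^ (k+2) / Real.Gamma (β * (k+2) + 1))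
      - 1 - (u - 0) • (1 / Real.Gamma (β + 1))
      = ∑' k : ℕ, u ^ (k+2) / Real.Gamma (β * (k+2) + 1) := by
    simp [smul_eq_mul]; ring
  rw [this]
  have hb := ml_tail_bound β hβ hu2
  rw [Real.norm_eq_abs, Real.norm_eq_abs, sub_zero]
  calc |∑' k : ℕ, u ^ (k+2) / Real.Gamma (β * (k+2) + 1)| ≤ 4 * u^2 := hb
    _ = 4 * |u| * |u| := by rw [← sq_abs]; ring
    _ ≤ c * |u| := by nlinarith [abs_nonneg u]

lemma hasLocalM (α β : ℝ) (hβ : 0 < β) (f : ℝ → ℝ) {x d : ℝ} (hx : 0 < x)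
    (hfx : HasDerivAt f d x) :
    HasLocalMDerivAt α β f x (d * (x * (1 / Real.Gamma (β + 1) * x ^ (-α)))) := by
  have h2 : HasDerivAt (fun ε : ℝ => ε * x ^ (-α)) (x ^ (-α)) 0 := by
    simpa using (hasDerivAt_id (0:ℝ)).mul_const (x ^ (-α))
  have h1 : HasDerivAt (mittagLeffler β) (1 / Real.Gamma (β + 1)) ((0:ℝ) * x ^ (-α)) := by
    rw [zero_mul]; exact ml_hasDerivAt β hβ
  have h3 : HasDerivAt (fun ε : ℝ => mittagLeffler β (ε * x ^ (-α)))
      (1 / Real.Gamma (β + 1) * x ^ (-α)) 0 := by have := h1.comp 0 h2; exact this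
  have h4 : HasDerivAt (fun ε : ℝ => x * mittagLeffler β (ε * x ^ (-α)))
      (x * (1 / Real.Gamma (β + 1) * x ^ (-α))) 0 := h3.const_mul x
  have hfx' : HasDerivAt f d (x * mittagLeffler β ((0:ℝ) * x ^ (-α))) := by
    rw [zero_mul, ml_zero, mul_one]; exact hfx
  have h5 : HasDerivAt (fun ε : ℝ => f (x * mittagLeffler β (ε * x ^ (-α))))
      (d * (x * (1 / Real.Gamma (β + 1) * x ^ (-α)))) 0 := hfx'.comp 0 h4
  rw [hasDerivAt_iff_tendsto_slope] at h5
  unfold HasLocalMDerivAt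
  refine Tendsto.congr' ?_ h5
  filter_upwards [self_mem_nhdsWithin] with ε hε
  have : (fun ε : ℝ => f (x * mittagLeffler β (ε * x ^ (-α)))) 0 = f x := by
    simp [ml_zero]
  rw [slope_def_field]
  simp only [this, sub_zero]

/-- Fundamental theorem of calculus for the local M-derivative:
`_M I_a^{α,β} (𝒟_M^{α,β} f)(t) = f(t) - f(a)`. -/
theorem stmt16 (a b α β : ℝ) (ha : 0 < a) (hab : a < b)
    (hα0 : 0 < α) (hα1 : α ≤ 1) (hβ : 0 < β)
    (f f' D : ℝ → ℝ)
    (hf : ∀ x ∈ Set.Icc a b, HasDerivAt f (f' x) x)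
    (hint : ∀ t ∈ Set.Ioc a b, IntervalIntegrable f' MeasureTheory.volume a t)
    (hD : ∀ x ∈ Set.Icc a b, HasLocalMDerivAt α β f x (D x)) :
    ∀ t ∈ Set.Ioo a b, MIntegral α β a t D = f t - f a := by
  have hΓ : (0:ℝ) < Real.Gamma (β + 1) := Real.Gamma_pos_of_pos (by linarith)
  have hDval : ∀ x ∈ Set.Icc a b,
      D x = f' x * (x * (1 / Real.Gamma (β + 1) * x ^ (-α))) := by
    intro x hx
    have hx0 : 0 < x := lt_of_lt_of_le ha hx.1
    exact tendsto_nhds_unique (hD x hx) (hasLocalM α β hβ f hx0 (hf x hx))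
  intro t ht
  have hat : a ≤ t := ht.1.le
  have htb : t ∈ Set.Ioc a b := ⟨ht.1, ht.2.le⟩
  have hsub : Set.Icc a t ⊆ Set.Icc a b := Set.Icc_subset_Icc le_rfl ht.2.le
  have hftc : ∫ x in a..t, f' x = f t - f a := by
    apply intervalIntegral.integral_eq_sub_of_hasDerivAt
    · intro x hx
      rw [Set.uIcc_of_le hat] at hx
      exact hf x (hsub hx)
    · exact hint t htb
  have hcongr : ∫ x in a..t, D x / x ^ (1 - α) = ∫ x in a..t, f' x / Real.Gamma (β + 1) := by
    apply intervalIntegral.integral_congr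
    intro x hx
    rw [Set.uIcc_of_le hat] at hx
    have hx0 : 0 < x := lt_of_lt_of_le ha hx.1
    show D x / x ^ (1 - α) = f' x / Real.Gamma (β + 1)
    rw [hDval x (hsub hx)]
    have hxpow : x ^ (1 - α) = x * x ^ (-α) := by
      rw [show (1 - α) = 1 + (-α) by ring, Real.rpow_add hx0, Real.rpow_one]
    have hne : x ^ (-α) ≠ 0 := (Real.rpow_pos_of_pos hx0 _).ne'
    rw [hxpow]
    field_simp
  unfold MIntegral
  rw [hcongr, intervalIntegral.integral_div, hftc]
  field_simp
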